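/- For every nonnegative integer N, the coefficient sequence of the Gaussian polynomial [N+4 choose 4]_q is unimodal: for all A with 0 ≤ A ≤ 2N - 1, p(2N - A, 4, N) ≥ p(2N - A - 1, 4, N). -/

import Mathlib

/-- `pBdd n m N` is the number of partitions of `n` into at most `m` parts,
each part at most `N`; it is `0` for negative `n`. -/
noncomputable def pBdd (n : ℤ) (m N : ℕ) : ℕ :=
  if 0 ≤ n then
    Nat.card {π : Nat.Partition n.toNat //
      Multiset.card π.parts ≤ m ∧ ∀ i ∈ π.parts, i ≤ N}
  else 0

/-- `pAtMost n m` is the number of partitions of `n` into at most `m` parts;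
it is `0` for negative `n`. -/
noncomputable def pAtMost (n : ℤ) (m : ℕ) : ℕ :=
  if 0 ≤ n then
    Nat.card {π : Nat.Partition n.toNat // Multiset.card π.parts ≤ m}
  else 0

/-! Auxiliary development. -/

/-- Quadruples `(a,b,c,d)` with `N ≥ a ≥ b ≥ c ≥ d` and sum `n`. -/
def Qset (n N : ℕ) : Finset (ℕ × ℕ × ℕ × ℕ) :=
  ((Finset.range (N+1)) ×ˢ (Finset.range (N+1)) ×ˢ (Finset.range (N+1)) ×ˢ
      (Finset.range (N+1))).filter
    fun q => q.2.2.2 ≤ q.2.2.1 ∧ q.2.2.1 ≤ q.2.1 ∧ q.2.1 ≤ q.1 ∧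
      q.1 + q.2.1 + q.2.2.1 + q.2.2.2 = n

lemma mem_Qset {n N a b c d : ℕ} :
    (a, b, c, d) ∈ Qset n N ↔
      d ≤ c ∧ c ≤ b ∧ b ≤ a ∧ a + b + c + d = n ∧ a ≤ N := by
  simp only [Qset, Finset.mem_filter, Finset.mem_product, Finset.mem_range]
  omega

lemma filter_pos_sum (m : Multiset ℕ) :
    (m.filter (fun i => 0 < i)).sum = m.sum := by
  induction m using Multiset.induction with
  | empty => simp
  | cons a s ih =>
    by_cases h : 0 < a
    · rw [Multiset.filter_cons_of_pos _ h, Multiset.sum_cons, Multiset.sum_cons, ih]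
    · rw [Multiset.filter_cons_of_neg _ h, Multiset.sum_cons, ih]; omega

lemma multiset_recover (m : Multiset ℕ) :
    m = m.filter (fun i => 0 < i) +
      Multiset.replicate (Multiset.card m - Multiset.card (m.filter (fun i => 0 < i))) 0 := by
  conv_lhs => rw [← Multiset.filter_add_not (fun i => 0 < i) m]
  congr 1
  rw [Multiset.eq_replicate]
  have hc : Multiset.card (m.filter (fun i => 0 < i)) +
      Multiset.card (m.filter (fun i => ¬ 0 < i)) = Multiset.card m := by
    rw [← Multiset.card_add, Multiset.filter_add_not]
  constructor
  · omega
  · intro b hb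
    have := Multiset.of_mem_filter hb
    omega

/-- the partition associated to a decreasing quadruple -/
def quadPart (n a b c d : ℕ) (h : d + (c + (b + (a + 0))) = n) : Nat.Partition n where
  parts := ((↑([d, c, b, a] : List ℕ) : Multiset ℕ)).filter (fun i => 0 < i)
  parts_pos := fun hi => Multiset.of_mem_filter hi
  parts_sum := by
    rw [filter_pos_sum, Multiset.sum_coe]
    simpa using h

lemma card_eq (n N : ℕ) :
    Nat.card {π : Nat.Partition n //
      Multiset.card π.parts ≤ 4 ∧ ∀ i ∈ π.parts, i ≤ N} = (Qset n N).card := by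
  rw [← Nat.card_eq_finsetCard]
  have hsum : ∀ q : ℕ × ℕ × ℕ × ℕ, q ∈ Qset n N →
      q.2.2.2 + (q.2.2.1 + (q.2.1 + (q.1 + 0))) = n := by
    rintro ⟨a, b, c, d⟩ hq
    rw [mem_Qset] at hq
    dsimp only
    omega
  refine (Nat.card_eq_of_bijective
    (fun q => ⟨quadPart n q.1.1 q.1.2.1 q.1.2.2.1 q.1.2.2.2 (hsum q.1 q.2), ?prop1, ?prop2⟩)
    ⟨?inj, ?surj⟩).symm
  case prop1 =>
    simp only [quadPart]
    exact le_trans (Multiset.card_le_card (Multiset.filter_le _ _)) (by simp)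
  case prop2 =>
    obtain ⟨⟨a, b, c, d⟩, hq⟩ := q
    rw [mem_Qset] at hq
    intro i hi
    simp only [quadPart] at hi
    have hmem := Multiset.mem_filter.1 hi |>.1
    simp only [Multiset.mem_coe, List.mem_cons, List.not_mem_nil, or_false] at hmem
    rcases hmem with h | h | h | h <;> omega
  case inj =>
    rintro ⟨⟨a, b, c, d⟩, hq⟩ ⟨⟨a', b', c', d'⟩, hq'⟩ h
    rw [Subtype.mk.injEq] at h
    have hparts := congrArg Nat.Partition.parts h
    simp only [quadPart] at hparts
    rw [mem_Qset] at hq hq'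
    -- recover the full multisets
    have key : (↑([d, c, b, a] : List ℕ) : Multiset ℕ) = (↑([d', c', b', a'] : List ℕ) : Multiset ℕ) := by
      rw [multiset_recover (↑([d, c, b, a] : List ℕ) : Multiset ℕ),
        multiset_recover (↑([d', c', b', a'] : List ℕ) : Multiset ℕ), hparts]
      simp
    have hperm : List.Perm [d, c, b, a] [d', c', b', a'] := Multiset.coe_eq_coe.mp key
    have hsorted1 : List.Pairwise (· ≤ ·) [d, c, b, a] := by
      simp [List.pairwise_cons]
      omega
    have hsorted2 : List.Pairwise (· ≤ ·) [d', c', b', a'] := by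
      simp [List.pairwise_cons]
      omega
    have := List.Perm.eq_of_pairwise' hsorted1 hsorted2 hperm
    simp only [List.cons.injEq, and_true] at this
    apply Subtype.ext
    simp only [Prod.mk.injEq]
    omega
  case surj =>
    rintro ⟨π, hcard, hle⟩
    set M := π.parts + Multiset.replicate (4 - Multiset.card π.parts) 0 with hM
    have hMcard : Multiset.card M = 4 := by
      rw [hM]
      simp only [Multiset.card_add, Multiset.card_replicate]
      omega
    have hlen : (M.sort (· ≤ ·)).length = 4 := by
      rw [Multiset.length_sort]; exact hMcard
    obtain ⟨d, c, b, a, hL⟩ : ∃ d c b a, M.sort (· ≤ ·) = [d, c, b, a] := by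
      rcases hs : M.sort (· ≤ ·) with _ | ⟨x1, _ | ⟨x2, _ | ⟨x3, _ | ⟨x4, _ | t⟩⟩⟩⟩ <;>
        rw [hs] at hlen <;> simp at hlen
      exact ⟨x1, x2, x3, x4, rfl⟩
    have hMl : (↑(M.sort (· ≤ ·)) : Multiset ℕ) = M := Multiset.sort_eq _ _
    rw [hL] at hMl
    have hsor := Multiset.pairwise_sort M (· ≤ ·)
    rw [hL] at hsor
    simp only [List.pairwise_cons, List.mem_cons, List.mem_singleton, List.not_mem_nil,
      forall_eq_or_imp, forall_eq, List.Pairwise.nil, and_true, IsEmpty.forall_iff,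
      implies_true] at hsor
    obtain ⟨⟨hdc, hdb, hda⟩, ⟨hcb, hca⟩, hba⟩ := hsor
    have hsum' : d + c + b + a = n := by
      have h1 : (↑([d, c, b, a] : List ℕ) : Multiset ℕ).sum = M.sum := by rw [hMl]
      rw [Multiset.sum_coe] at h1
      simp only [List.sum_cons, List.sum_nil] at h1
      have h2 : M.sum = n := by
        rw [hM, Multiset.sum_add, Multiset.sum_replicate, π.parts_sum]
        simp
      omega
    have hbound : ∀ x ∈ ([d, c, b, a] : List ℕ), x ≤ N := by
      intro x hx
      have hxM : x ∈ M := by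
        rw [← hMl]
        exact Multiset.mem_coe.mpr hx
      rw [hM] at hxM
      rcases Multiset.mem_add.1 hxM with h | h
      · exact hle x h
      · have := Multiset.eq_of_mem_replicate h
        omega
    have haN : a ≤ N := hbound a (by simp)
    have hbN : b ≤ N := hbound b (by simp)
    have hcN : c ≤ N := hbound c (by simp)
    have hdN : d ≤ N := hbound d (by simp)
    have hmem : (a, b, c, d) ∈ Qset n N := mem_Qset.mpr ⟨hdc, hcb, hba, by omega, haN⟩
    refine ⟨⟨(a, b, c, d), hmem⟩, ?_⟩
    apply Subtype.ext
    apply Nat.Partition.ext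
    show ((↑([d, c, b, a] : List ℕ) : Multiset ℕ)).filter (fun i => 0 < i) = π.parts
    rw [hMl, hM, Multiset.filter_add]
    rw [Multiset.filter_eq_self.mpr (fun i hi => π.parts_pos hi)]
    have : (Multiset.replicate (4 - Multiset.card π.parts) 0).filter (fun i => 0 < i) = 0 := by
      rw [Multiset.filter_eq_nil]
      intro x hx
      have := Multiset.eq_of_mem_replicate hx
      omega
    rw [this, add_zero]

/-- the injection on quadruples -/
def Gmap (N : ℕ) (q : ℕ × ℕ × ℕ × ℕ) : ℕ × ℕ × ℕ × ℕ :=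
  if q.1 < N then (q.1 + 1, q.2.1, q.2.2.1, q.2.2.2)
  else
    (q.2.1 + q.2.2.2 + (N + 1 - (q.2.1 + q.2.2.1 + q.2.2.2) -
        3 * ((N + 1 - (q.2.1 + q.2.2.1 + q.2.2.2)) % 2)) / 2 +
        (N + 1 - (q.2.1 + q.2.2.1 + q.2.2.2)) % 2,
     q.2.1 + q.2.2.2 + (N + 1 - (q.2.1 + q.2.2.1 + q.2.2.2) -
        3 * ((N + 1 - (q.2.1 + q.2.2.1 + q.2.2.2)) % 2)) / 2 +
        (N + 1 - (q.2.1 + q.2.2.1 + q.2.2.2)) % 2,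
     q.2.2.1 + q.2.2.2 + (N + 1 - (q.2.1 + q.2.2.1 + q.2.2.2)) % 2,
     q.2.2.1 - q.2.2.2)

lemma Qcard_mono {n N : ℕ} (h1 : 1 ≤ n) (h2 : n ≤ 2 * N) :
    (Qset (n - 1) N).card ≤ (Qset n N).card := by
  apply Finset.card_le_card_of_injOn (Gmap N)
  · rintro ⟨a, b, c, d⟩ hq
    rw [Finset.mem_coe, mem_Qset] at hq
    simp only [Gmap]
    split_ifs with h
    · rw [Finset.mem_coe, mem_Qset]; omega
    · rw [Finset.mem_coe, mem_Qset]; omega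
  · rintro ⟨a, b, c, d⟩ hq ⟨a', b', c', d'⟩ hq' h
    rw [Finset.mem_coe, mem_Qset] at hq hq'
    simp only [Gmap] at h
    split_ifs at h with ha ha' ha'
    all_goals
      simp only [Prod.mk.injEq] at h ⊢
      omega

lemma pBdd_natCast (k m N : ℕ) :
    pBdd (k : ℤ) m N = Nat.card {π : Nat.Partition k //
      Multiset.card π.parts ≤ m ∧ ∀ i ∈ π.parts, i ≤ N} := by
  simp [pBdd]

/-- Unimodality of the coefficients of `[N+4 choose 4]_q`. -/
theorem stmt9 (N A : ℕ) (hA : A + 1 ≤ 2 * N) :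
    pBdd (2 * (N : ℤ) - A - 1) 4 N ≤ pBdd (2 * (N : ℤ) - A) 4 N := by
  have e1 : (2 * (N : ℤ) - A - 1) = ((2 * N - A - 1 : ℕ) : ℤ) := by omega
  have e2 : (2 * (N : ℤ) - A) = ((2 * N - A : ℕ) : ℤ) := by omega
  rw [e1, e2, pBdd_natCast, pBdd_natCast, card_eq, card_eq]
  exact Qcard_mono (n := 2 * N - A) (by omega) (by omega)
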